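/- Let P be a nonzero subpartition of a finite set X containing a block B with |B| ≥ 3. Then P has no canonical join representation: the set of irredundant join representations of P by join-irreducible elements, preordered by join-refinement, has no unique minimum. -/

import Mathlib

/-- A subpartition of `X`: a collection of nonempty pairwise disjoint blocks. -/
structure Subpartition (X : Type*) where
  blocks : Set (Set X)
  nonempty_blocks : ∀ B ∈ blocks, B.Nonempty
  pairwise_disjoint : ∀ B ∈ blocks, ∀ C ∈ blocks, B ≠ C → Disjoint B C

/-- `P` refines `Q`: every block of `P` is contained in some block of `Q`. -/
def Subpartition.Refines {X : Type*} (P Q : Subpartition X) : Prop :=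
  ∀ B ∈ P.blocks, ∃ C ∈ Q.blocks, B ⊆ C

/-- The empty subpartition: the zero element of `SubPart(X)`. -/
def Subpartition.empty (X : Type*) : Subpartition X :=
  ⟨∅, fun _ h => absurd h (Set.notMem_empty _), fun _ h => absurd h (Set.notMem_empty _)⟩

/-- `J` is the join (least upper bound) of `P` and `Q` with respect to refinement. -/
def Subpartition.IsJoin {X : Type*} (P Q J : Subpartition X) : Prop :=
  P.Refines J ∧ Q.Refines J ∧
    ∀ S : Subpartition X, P.Refines S → Q.Refines S → J.Refines S

/-- `P` is join-irreducible. -/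
def Subpartition.JoinIrred {X : Type*} (P : Subpartition X) : Prop :=
  P ≠ Subpartition.empty X ∧
    ∀ Q R : Subpartition X, Subpartition.IsJoin Q R P → P = Q ∨ P = R

/-- `P` is the join (least upper bound) of the set `A` with respect to refinement. -/
def Subpartition.IsSetJoin {X : Type*} (A : Set (Subpartition X)) (P : Subpartition X) :
    Prop :=
  (∀ a ∈ A, a.Refines P) ∧ ∀ S : Subpartition X, (∀ a ∈ A, a.Refines S) → P.Refines S

/-- `A` is an irredundant join representation of `P` by join-irreducible elements:
the elements of `A` are join-irreducible, `⋁A = P`, and the join of every proper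
subset of `A` is strictly smaller than `P`. -/
def Subpartition.IrredundantRep {X : Type*} (A : Set (Subpartition X))
    (P : Subpartition X) : Prop :=
  (∀ a ∈ A, a.JoinIrred) ∧ Subpartition.IsSetJoin A P ∧
    ∀ A' : Set (Subpartition X), A' ⊂ A →
      ∀ J : Subpartition X, Subpartition.IsSetJoin A' J → J ≠ P

/-- `A` join-refines `B`: every element of `A` lies below some element of `B`. -/
def Subpartition.JoinRefines {X : Type*} (A B : Set (Subpartition X)) : Prop :=
  ∀ a ∈ A, ∃ b ∈ B, a.Refines b
namespace Subpartition

variable {X : Type*}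

lemma ext' {P Q : Subpartition X} (h : P.blocks = Q.blocks) : P = Q := by
  cases P; cases Q; simpa using h

/-- The single-block subpartition with block `{p, w}`. -/
def single (p w : X) : Subpartition X where
  blocks := {{p, w}}
  nonempty_blocks := by rintro B rfl; exact ⟨p, Or.inl rfl⟩
  pairwise_disjoint := by rintro B rfl C rfl h; exact absurd rfl h

lemma single_ne_empty (p w : X) : single p w ≠ Subpartition.empty X := by
  intro h
  have : ({p, w} : Set X) ∈ (Subpartition.empty X).blocks := by rw [← h]; exact rfl
  exact this

lemma subset_of_refines_single {T : Subpartition X} {p w : X}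
    (h : T.Refines (single p w)) {D : Set X} (hD : D ∈ T.blocks) :
    D ⊆ ({p, w} : Set X) := by
  obtain ⟨F, hF, hsub⟩ := h D hD
  obtain rfl : F = {p, w} := hF
  exact hsub

lemma blocks_ne_of_refines_single {T : Subpartition X} {p w : X}
    (h : T.Refines (single p w)) (hne : T ≠ single p w) :
    ∀ D ∈ T.blocks, D ≠ ({p, w} : Set X) := by
  intro D hD hDeq
  apply hne
  apply ext'
  apply Set.eq_singleton_iff_unique_mem.mpr
  refine ⟨hDeq ▸ hD, ?_⟩
  intro E hE
  have hEF : E ⊆ ({p, w} : Set X) := subset_of_refines_single h hE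
  by_contra hEne
  have hdisj := T.pairwise_disjoint E hE D hD (by rw [hDeq]; exact hEne)
  obtain ⟨v, hv⟩ := T.nonempty_blocks E hE
  exact Set.disjoint_left.mp hdisj hv (by rw [hDeq]; exact hEF hv)

/-- The two-singleton-blocks subpartition `{{p}, {w}}`. -/
def two (p w : X) : Subpartition X where
  blocks := {{p}, {w}}
  nonempty_blocks := by rintro B (rfl | rfl) <;> exact ⟨_, rfl⟩
  pairwise_disjoint := by
    rintro B (rfl | rfl) C (rfl | rfl) h
    · exact absurd rfl h
    · refine Set.disjoint_singleton.mpr fun hpw => h (by rw [hpw])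
    · refine Set.disjoint_singleton.mpr fun hpw => h (by rw [hpw])
    · exact absurd rfl h

lemma joinIrred_single (p w : X) : (single p w).JoinIrred := by
  classical
  refine ⟨single_ne_empty p w, ?_⟩
  rintro Q R ⟨hQr, hRr, hlub⟩
  by_contra hc
  push_neg at hc
  obtain ⟨hQ, hR⟩ := hc
  by_cases hpw : p = w
  · subst hpw
    have hblk : ∀ T : Subpartition X, T.Refines (single p p) → T ≠ single p p →
        T.blocks = ∅ := by
      intro T hTr hTne
      ext D
      simp only [Set.mem_empty_iff_false, iff_false]
      intro hD
      have h1 : D ⊆ ({p, p} : Set X) := subset_of_refines_single hTr hD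
      have h2 := blocks_ne_of_refines_single hTr hTne D hD
      obtain ⟨v, hv⟩ := T.nonempty_blocks D hD
      apply h2
      apply Set.Subset.antisymm h1
      intro u hu
      have : u = p := by rcases hu with rfl | rfl <;> rfl
      subst this
      have : v = u := by rcases h1 hv with rfl | rfl <;> rfl
      rwa [← this]
    have hQe : Q = Subpartition.empty X := ext' (hblk Q hQr (Ne.symm hQ))
    have hRe : R = Subpartition.empty X := ext' (hblk R hRr (Ne.symm hR))
    have hre : ∀ T : Subpartition X, T = Subpartition.empty X →
        T.Refines (Subpartition.empty X) := by
      rintro T rfl B hB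
      exact absurd hB (Set.notMem_empty B)
    have : (single p p).Refines (Subpartition.empty X) :=
      hlub _ (hre Q hQe) (hre R hRe)
    obtain ⟨C, hC, -⟩ := this {p, p} rfl
    exact absurd hC (Set.notMem_empty C)
  · have key : ∀ T : Subpartition X, T.Refines (single p w) → T ≠ single p w →
        T.Refines (two p w) := by
      intro T hTr hTne D hD
      have h1 : D ⊆ ({p, w} : Set X) := subset_of_refines_single hTr hD
      have h2 := blocks_ne_of_refines_single hTr hTne D hD
      by_cases hp : p ∈ D
      · refine ⟨{p}, Or.inl rfl, ?_⟩
        intro u hu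
        rcases h1 hu with rfl | rfl
        · rfl
        · exfalso
          apply h2
          apply Set.Subset.antisymm h1
          rintro t (rfl | rfl)
          · exact hp
          · exact hu
      · refine ⟨{w}, Or.inr rfl, ?_⟩
        intro u hu
        rcases h1 hu with rfl | rfl
        · exact (hp hu).elim
        · rfl
    have := hlub (two p w) (key Q hQr (Ne.symm hQ)) (key R hRr (Ne.symm hR))
    obtain ⟨E, hE, hsub⟩ := this {p, w} rfl
    rcases hE with rfl | rfl
    · exact hpw (hsub (Or.inr rfl)).symm
    · exact hpw (hsub (Or.inl rfl))

/-- Replace a block `C` of `P` by a family `N` of disjoint nonempty subsets of `C`. -/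
def subdivide (P : Subpartition X) (C : Set X) (hC : C ∈ P.blocks)
    (N : Set (Set X)) (hN : ∀ n ∈ N, n.Nonempty) (hNC : ∀ n ∈ N, n ⊆ C)
    (hNd : ∀ n ∈ N, ∀ m ∈ N, n ≠ m → Disjoint n m) : Subpartition X where
  blocks := (P.blocks \ {C}) ∪ N
  nonempty_blocks := by
    rintro D (⟨hD, -⟩ | hD)
    · exact P.nonempty_blocks D hD
    · exact hN D hD
  pairwise_disjoint := by
    rintro D (⟨hD, hDC⟩ | hD) E (⟨hE, hEC⟩ | hE) hne
    · exact P.pairwise_disjoint D hD E hE hne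
    · exact (P.pairwise_disjoint D hD C hC fun h => hDC h).mono_right (hNC E hE)
    · exact ((P.pairwise_disjoint E hE C hC fun h => hEC h).mono_right (hNC D hD)).symm
    · exact hNd D hD E hE hne

/-- The star representation of `P` given a choice function `f`. -/
def rep (P : Subpartition X) (f : Set X → X) : Set (Subpartition X) :=
  { q | ∃ C ∈ P.blocks, ∃ w ∈ C, (w ≠ f C ∨ C = {f C}) ∧ q = single (f C) w }

lemma irredundantRep_rep (P : Subpartition X) (f : Set X → X)
    (hf : ∀ C ∈ P.blocks, f C ∈ C) : Subpartition.IrredundantRep (rep P f) P := by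
  classical
  refine ⟨?_, ⟨?_, ?_⟩, ?_⟩
  · rintro a ⟨C, hC, w, hw, -, rfl⟩
    exact joinIrred_single _ _
  · -- upper bound
    rintro a ⟨C, hC, w, hw, -, rfl⟩ D hD
    obtain rfl : D = {f C, w} := hD
    refine ⟨C, hC, ?_⟩
    rintro v (rfl | rfl)
    · exact hf C hC
    · exact hw
  · -- least upper bound
    intro S hS C hC
    by_cases hex : ∃ w ∈ C, w ≠ f C
    · obtain ⟨w₀, hw₀, hw₀ne⟩ := hex
      obtain ⟨D, hD, hsub⟩ := hS (single (f C) w₀) ⟨C, hC, w₀, hw₀, Or.inl hw₀ne, rfl⟩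
        {f C, w₀} rfl
      refine ⟨D, hD, ?_⟩
      intro v hv
      by_cases hvf : v = f C
      · exact hsub (by rw [hvf]; exact Or.inl rfl)
      · obtain ⟨D', hD', hsub'⟩ := hS (single (f C) v) ⟨C, hC, v, hv, Or.inl hvf, rfl⟩
          {f C, v} rfl
        have hDD' : D = D' := by
          by_contra hne
          exact Set.disjoint_left.mp (S.pairwise_disjoint D hD D' hD' hne)
            (hsub (Or.inl rfl)) (hsub' (Or.inl rfl))
        rw [hDD']
        exact hsub' (Or.inr rfl)
    · push_neg at hex
      have hCs : C = {f C} := Set.eq_singleton_iff_unique_mem.mpr ⟨hf C hC, hex⟩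
      obtain ⟨D, hD, hsub⟩ := hS (single (f C) (f C))
        ⟨C, hC, f C, hf C hC, Or.inr hCs, rfl⟩ {f C, f C} rfl
      refine ⟨D, hD, ?_⟩
      rw [hCs]
      intro v hv
      exact hsub (Or.inl hv)
  · -- irredundancy
    intro A' hss J hJ hJP
    rw [hJP] at hJ
    obtain ⟨e, he, heA'⟩ := Set.exists_of_ssubset hss
    obtain ⟨C, hC, w, hw, hcond, rfl⟩ := he
    rcases hcond with hwf | hCs
    · -- w ≠ f C : split C into C \ {w} and {w}
      have hfCd : f C ∈ C \ {w} := ⟨hf C hC, fun h => hwf (Set.mem_singleton_iff.mp h).symm⟩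
      set S : Subpartition X := subdivide P C hC {C \ {w}, {w}}
        (by rintro n (rfl | rfl)
            exacts [⟨f C, hfCd⟩, ⟨w, rfl⟩])
        (by rintro n (rfl | rfl)
            exacts [Set.diff_subset, Set.singleton_subset_iff.mpr hw])
        (by rintro n (rfl | rfl) m (rfl | rfl) hne
            · exact absurd rfl hne
            · exact Set.disjoint_singleton_right.mpr (fun h => h.2 rfl)
            · exact (Set.disjoint_singleton_right.mpr (fun h => h.2 rfl)).symm
            · exact absurd rfl hne) with hSdef
      have hall : ∀ a ∈ A', a.Refines S := by
        intro a ha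
        obtain ⟨C', hC', w', hw', hcond', rfl⟩ := hss.1 ha
        intro D hD
        obtain rfl : D = {f C', w'} := hD
        by_cases hCC : C' = C
        · subst hCC
          by_cases hww : w' = w
          · subst hww; exact absurd ha heA'
          · refine ⟨C' \ {w}, Or.inr (Or.inl rfl), ?_⟩
            rintro v (rfl | rfl)
            · exact hfCd
            · exact ⟨hw', fun h => hww (Set.mem_singleton_iff.mp h)⟩
        · refine ⟨C', Or.inl ⟨hC', hCC⟩, ?_⟩
          rintro v (rfl | rfl)
          · exact hf C' hC'
          · exact hw'
      obtain ⟨D, hD, hCD⟩ := hJ.2 S hall C hC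
      rcases hD with ⟨hDP, hDne⟩ | (rfl | rfl)
      · exact Set.disjoint_left.mp
          (P.pairwise_disjoint C hC D hDP fun h => hDne h.symm)
          (hf C hC) (hCD (hf C hC))
      · exact (hCD hw).2 rfl
      · exact hwf (hCD (hf C hC)).symm
    · -- C = {f C} : delete C
      obtain rfl : w = f C := by rw [hCs] at hw; exact hw
      set S : Subpartition X := subdivide P C hC ∅
        (fun n h => absurd h (Set.notMem_empty n))
        (fun n h => absurd h (Set.notMem_empty n))
        (fun n h => absurd h (Set.notMem_empty n)) with hSdef
      have hall : ∀ a ∈ A', a.Refines S := by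
        intro a ha
        obtain ⟨C', hC', w', hw', hcond', rfl⟩ := hss.1 ha
        intro D hD
        obtain rfl : D = {f C', w'} := hD
        by_cases hCC : C' = C
        · subst hCC
          obtain rfl : w' = f C' := by rw [hCs] at hw'; exact hw'
          exact absurd ha heA'
        · refine ⟨C', Or.inl ⟨hC', hCC⟩, ?_⟩
          rintro v (rfl | rfl)
          · exact hf C' hC'
          · exact hw'
      obtain ⟨D, hD, hCD⟩ := hJ.2 S hall C hC
      rcases hD with ⟨hDP, hDne⟩ | h
      · exact Set.disjoint_left.mp
          (P.pairwise_disjoint C hC D hDP fun h => hDne h.symm)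
          (hf C hC) (hCD (hf C hC))
      · exact absurd h (Set.notMem_empty D)

end Subpartition
/-- A nonzero subpartition of a finite set containing a block with at least three
elements has no canonical join representation: among its irredundant join
representations by join-irreducible elements, preordered by join-refinement,
there is no unique minimum. -/
theorem subpartition_no_canonical_join_representation {X : Type*} [Finite X]
    (P : Subpartition X) (hP : P ≠ Subpartition.empty X)
    (hB : ∃ B ∈ P.blocks, ∃ x y z : X,
      x ≠ y ∧ y ≠ z ∧ x ≠ z ∧ x ∈ B ∧ y ∈ B ∧ z ∈ B) :
    ¬ ∃ A : Set (Subpartition X), Subpartition.IrredundantRep A P ∧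
        (∀ A' : Set (Subpartition X), Subpartition.IrredundantRep A' P →
          Subpartition.JoinRefines A A') ∧
        (∀ A' : Set (Subpartition X), Subpartition.IrredundantRep A' P →
          (∀ A'' : Set (Subpartition X), Subpartition.IrredundantRep A'' P →
            Subpartition.JoinRefines A' A'') → A' = A) := by
  classical
  obtain ⟨B, hBP, x, y, z, hxy, hyz, hxz, hxB, hyB, hzB⟩ := hB
  rintro ⟨A, hArep, hAmin, -⟩
  -- two choice functions, centering the star on `B` at `x` resp. `y`
  set f₁ : Set X → X := fun C => if C = B then x else if h : C.Nonempty then h.some else x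
    with hf₁def
  set f₂ : Set X → X := fun C => if C = B then y else if h : C.Nonempty then h.some else y
    with hf₂def
  have hf₁ : ∀ C ∈ P.blocks, f₁ C ∈ C := by
    intro C hC
    by_cases h : C = B
    · rw [hf₁def]; simp only [if_pos h]; rw [h]; exact hxB
    · have hne := P.nonempty_blocks C hC
      rw [hf₁def]; simp only [if_neg h, dif_pos hne]; exact hne.some_mem
  have hf₂ : ∀ C ∈ P.blocks, f₂ C ∈ C := by
    intro C hC
    by_cases h : C = B
    · rw [hf₂def]; simp only [if_pos h]; rw [h]; exact hyB
    · have hne := P.nonempty_blocks C hC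
      rw [hf₂def]; simp only [if_neg h, dif_pos hne]; exact hne.some_mem
  have hf₁B : f₁ B = x := by rw [hf₁def]; simp
  have hf₂B : f₂ B = y := by rw [hf₂def]; simp
  have h₁ := hAmin _ (Subpartition.irredundantRep_rep P f₁ hf₁)
  have h₂ := hAmin _ (Subpartition.irredundantRep_rep P f₂ hf₂)
  -- split `B` into `B \ {z}` and `{z}`
  set S₀ : Subpartition X := Subpartition.subdivide P B hBP {B \ {z}, {z}}
    (by rintro n (rfl | rfl)
        exacts [⟨x, hxB, fun h => hxz (Set.mem_singleton_iff.mp h)⟩, ⟨z, rfl⟩])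
    (by rintro n (rfl | rfl)
        exacts [Set.diff_subset, Set.singleton_subset_iff.mpr hzB])
    (by rintro n (rfl | rfl) m (rfl | rfl) hne
        · exact absurd rfl hne
        · exact Set.disjoint_singleton_right.mpr (fun h => h.2 rfl)
        · exact (Set.disjoint_singleton_right.mpr (fun h => h.2 rfl)).symm
        · exact absurd rfl hne) with hS₀def
  have hall : ∀ a ∈ A, a.Refines S₀ := by
    intro a ha
    obtain ⟨b₁, hb₁, har₁⟩ := h₁ a ha
    obtain ⟨b₂, hb₂, har₂⟩ := h₂ a ha
    obtain ⟨C₁, hC₁, w₁, hw₁, -, rfl⟩ := hb₁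
    obtain ⟨C₂, hC₂, w₂, hw₂, -, rfl⟩ := hb₂
    intro D hD
    have hsub₁ : D ⊆ ({f₁ C₁, w₁} : Set X) := Subpartition.subset_of_refines_single har₁ hD
    have hsub₂ : D ⊆ ({f₂ C₂, w₂} : Set X) := Subpartition.subset_of_refines_single har₂ hD
    have hDC₁ : D ⊆ C₁ := by
      intro v hv
      rcases hsub₁ hv with rfl | rfl
      · exact hf₁ C₁ hC₁
      · exact hw₁
    have hDC₂ : D ⊆ C₂ := by
      intro v hv
      rcases hsub₂ hv with rfl | rfl
      · exact hf₂ C₂ hC₂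
      · exact hw₂
    obtain ⟨v₀, hv₀⟩ := a.nonempty_blocks D hD
    by_cases hC₁B : C₁ = B
    · subst hC₁B
      have hC₂B : C₂ = C₁ := by
        by_contra hne
        exact Set.disjoint_left.mp (P.pairwise_disjoint C₂ hC₂ C₁ hC₁ hne)
          (hDC₂ hv₀) (hDC₁ hv₀)
      subst hC₂B
      rw [hf₁B] at hsub₁
      rw [hf₂B] at hsub₂
      by_cases hzD : z ∈ D
      · refine ⟨{z}, Or.inr (Or.inr rfl), ?_⟩
        have hw₁z : w₁ = z := by
          rcases hsub₁ hzD with h | h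
          · exact absurd h.symm hxz
          · exact h.symm
        have hw₂z : w₂ = z := by
          rcases hsub₂ hzD with h | h
          · exact absurd h.symm hyz
          · exact h.symm
        intro v hv
        rcases hsub₁ hv with rfl | rfl
        · rcases hsub₂ hv with h | h
          · exact absurd h hxy
          · rw [hw₂z] at h; exact h
        · rw [hw₁z]; rfl
      · refine ⟨C₂ \ {z}, Or.inr (Or.inl rfl), ?_⟩
        intro v hv
        exact ⟨hDC₁ hv, fun h => hzD ((Set.mem_singleton_iff.mp h) ▸ hv)⟩
    · exact ⟨C₁, Or.inl ⟨hC₁, hC₁B⟩, hDC₁⟩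
  obtain ⟨D, hD, hBD⟩ := hArep.2.1.2 S₀ hall B hBP
  rcases hD with ⟨hDP, hDne⟩ | (rfl | rfl)
  · exact Set.disjoint_left.mp
      (P.pairwise_disjoint B hBP D hDP fun h => hDne h.symm) hxB (hBD hxB)
  · exact (hBD hzB).2 rfl
  · exact hxz (hBD hxB)
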